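/- If H is an r-uniform hypergraph, e* an edge of H, and H - e* (same vertex set, edge e* deleted) has a proper t-coloring, and H contains no copy of a fixed r-tree T with t edges, then H itself has a proper t-coloring. -/

import Mathlib

open Finset

structure FinHypergraph (V : Type*) where
  edges : Finset (Finset V)

namespace FinHypergraph

variable {V : Type*} [DecidableEq V]

/-- `H` is `r`-uniform: every edge has exactly `r` vertices. -/
def Uniform (H : FinHypergraph V) (r : ℕ) : Prop := ∀ e ∈ H.edges, e.card = r

/-- Two vertices are adjacent if some edge contains both. -/
def adj (H : FinHypergraph V) (u w : V) : Prop := ∃ e ∈ H.edges, u ∈ e ∧ w ∈ e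

/-- `H` is connected: any two vertices are joined by a walk. -/
def Connected (H : FinHypergraph V) : Prop := ∀ u w : V, Relation.ReflTransGen H.adj u w

/-- No two distinct edges intersect in more than one vertex. -/
def Linear (H : FinHypergraph V) : Prop :=
  ∀ e ∈ H.edges, ∀ f ∈ H.edges, e ≠ f → (e ∩ f).card ≤ 1

/-- A Berge cycle: distinct vertices `v 0, …, v (k-1)` and distinct edges
`e 0, …, e (k-1)`, `k ≥ 2`, with `{v i, v (i+1)} ⊆ e i` cyclically. -/
def HasBergeCycle (H : FinHypergraph V) : Prop :=
  ∃ k : ℕ, ∃ _ : 2 ≤ k, ∃ (v : Fin k → V) (e : Fin k → Finset V),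
    Function.Injective v ∧ Function.Injective e ∧
    (∀ i, e i ∈ H.edges) ∧
    (∀ i : Fin k, v i ∈ e i ∧ v ⟨(i.val + 1) % k, Nat.mod_lt _ (by omega)⟩ ∈ e i)

/-- A hypertree: connected, linear, with no Berge cycle. -/
def IsHypertree (H : FinHypergraph V) : Prop :=
  H.Connected ∧ H.Linear ∧ ¬ H.HasBergeCycle

/-- A proper coloring: no edge is monochromatic. -/
def Proper (H : FinHypergraph V) {k : ℕ} (c : V → Fin k) : Prop :=
  ∀ e ∈ H.edges, ¬ ∀ u ∈ e, ∀ w ∈ e, c u = c w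

/-- The chromatic number: least number of colors in a proper coloring. -/
noncomputable def chromaticNumber (H : FinHypergraph V) : ℕ :=
  sInf {k | ∃ c : V → Fin k, H.Proper c}

/-- `H` contains a copy of `T`: an injective vertex map sending edges to edges. -/
def ContainsCopy {W : Type*} [DecidableEq W] (H : FinHypergraph V) (T : FinHypergraph W) : Prop :=
  ∃ φ : W → V, Function.Injective φ ∧ ∀ e ∈ T.edges, e.image φ ∈ H.edges

end FinHypergraph

/-- The complete `r`-uniform hypergraph on `Fin n`. -/
def completeHypergraph (n r : ℕ) : FinHypergraph (Fin n) :=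
  ⟨Finset.univ.powersetCard r⟩


namespace Stmt14Aux

open FinHypergraph

variable {W : Type*} [DecidableEq W]

/-- Union of the first `k` edges of a sequence. -/
def Uset (g : ℕ → Finset W) (k : ℕ) : Finset W := (Finset.range k).biUnion g

lemma mem_Uset {g : ℕ → Finset W} {k : ℕ} {w : W} :
    w ∈ Uset g k ↔ ∃ j < k, w ∈ g j := by
  simp [Uset, Finset.mem_biUnion]

lemma Uset_mono {g : ℕ → Finset W} {k k' : ℕ} (h : k ≤ k') : Uset g k ⊆ Uset g k' := by
  intro w hw
  rw [mem_Uset] at hw ⊢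
  obtain ⟨j, hj, hm⟩ := hw
  exact ⟨j, lt_of_lt_of_le hj h, hm⟩

lemma subset_Uset {g : ℕ → Finset W} {k j : ℕ} (h : j < k) : g j ⊆ Uset g k := by
  intro w hw
  exact mem_Uset.mpr ⟨j, h, hw⟩

lemma Uset_succ {g : ℕ → Finset W} {k : ℕ} : Uset g (k+1) = Uset g k ∪ g k := by
  simp [Uset, Finset.range_add_one, Finset.biUnion_insert, Finset.union_comm]

/-- Properties of a (Berge) path inside the first `k` edges of the sequence `g`. -/
def PathProps (g : ℕ → Finset W) (k n : ℕ) (v : ℕ → W) (h : ℕ → Finset W) : Prop :=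
  (∀ i ≤ n, ∀ j ≤ n, v i = v j → i = j) ∧
  (∀ i < n, ∀ j < n, h i = h j → i = j) ∧
  (∀ i < n, ∃ j < k, h i = g j) ∧
  (∀ i < n, v i ∈ h i ∧ v (i+1) ∈ h i) ∧
  (∀ i ≤ n, v i ∈ Uset g k)

lemma pathProps_mono {g : ℕ → Finset W} {k k' n : ℕ} (hkk : k ≤ k')
    {v : ℕ → W} {h : ℕ → Finset W} (hp : PathProps g k n v h) :
    PathProps g k' n v h := by
  obtain ⟨h1, h2, h3, h4, h5⟩ := hp
  refine ⟨h1, h2, ?_, h4, ?_⟩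
  · intro i hi
    obtain ⟨j, hj, he⟩ := h3 i hi
    exact ⟨j, lt_of_lt_of_le hj hkk, he⟩
  · intro i hi
    exact Uset_mono hkk (h5 i hi)

/-- Reversing a path. -/
lemma pathProps_reverse {g : ℕ → Finset W} {k n : ℕ} {v : ℕ → W} {h : ℕ → Finset W}
    (hp : PathProps g k n v h) :
    PathProps g k n (fun i => v (n - i)) (fun i => h (n - 1 - i)) ∧
      (fun i => v (n - i)) 0 = v n ∧ (fun i => v (n - i)) n = v 0 := by
  obtain ⟨h1, h2, h3, h4, h5⟩ := hp
  refine ⟨⟨?_, ?_, ?_, ?_, ?_⟩, by simp, by simp⟩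
  · intro i hi j hj hv
    have := h1 (n - i) (by omega) (n - j) (by omega) hv
    omega
  · intro i hi j hj hh
    have := h2 (n - 1 - i) (by omega) (n - 1 - j) (by omega) hh
    omega
  · intro i hi
    exact h3 (n - 1 - i) (by omega)
  · intro i hi
    have hidx : n - 1 - i < n := by omega
    have e1 : n - i = (n - 1 - i) + 1 := by omega
    have e2 : n - (i + 1) = n - 1 - i := by omega
    exact ⟨by dsimp only; rw [e1]; exact (h4 _ hidx).2,
      by dsimp only; rw [e2]; exact (h4 _ hidx).1⟩
  · intro i hi
    exact h5 (n - i) (by omega)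

/-- In a "strict tree sequence" any two covered vertices are joined by a Berge path. -/
lemma path_exists (g : ℕ → Finset W) :
    ∀ k, 1 ≤ k →
    (∀ i < k, ∀ j < k, g i = g j → i = j) →
    (∀ i, 1 ≤ i → i < k → (g i ∩ Uset g i).card = 1) →
    ∀ u w : W, u ∈ Uset g k → w ∈ Uset g k → u ≠ w →
    ∃ n, 1 ≤ n ∧ ∃ v : ℕ → W, ∃ h : ℕ → Finset W,
      ((v 0 = u ∧ v n = w) ∨ (v 0 = w ∧ v n = u)) ∧ PathProps g k n v h := by
  intro k
  induction k with
  | zero => omega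
  | succ k ih =>
    intro _ hinj hstrict u w hu hw huw
    -- single-edge path helper
    have single : ∀ (a b : W), a ∈ g k → b ∈ g k → a ≠ b →
        ∃ n, 1 ≤ n ∧ ∃ v : ℕ → W, ∃ h : ℕ → Finset W,
          ((v 0 = a ∧ v n = b) ∨ (v 0 = b ∧ v n = a)) ∧ PathProps g (k+1) n v h := by
      intro a b ha hb hab
      refine ⟨1, le_refl 1, (fun i => if i = 0 then a else b), (fun _ => g k),
        Or.inl ⟨by simp, by simp⟩, ?_, ?_, ?_, ?_, ?_⟩
      · intro i hi j hj hv
        interval_cases i <;> interval_cases j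
        · rfl
        · exact absurd (show a = b by simpa using hv) hab
        · exact absurd (show a = b by simpa using hv.symm) hab
        · rfl
      · intro i hi j hj _
        omega
      · intro i _
        exact ⟨k, by omega, rfl⟩
      · intro i hi
        interval_cases i
        simp [ha, hb]
      · intro i hi
        interval_cases i <;> simp [subset_Uset (Nat.lt_succ_self k) ha,
          subset_Uset (Nat.lt_succ_self k) hb]
    rcases Nat.eq_zero_or_pos k with hk0 | hk1
    · -- base case k = 0 : everything is in g 0
      subst hk0
      have hu' : u ∈ g 0 := by
        rcases mem_Uset.mp hu with ⟨j, hj, hm⟩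
        interval_cases j; exact hm
      have hw' : w ∈ g 0 := by
        rcases mem_Uset.mp hw with ⟨j, hj, hm⟩
        interval_cases j; exact hm
      exact single u w hu' hw' huw
    · -- inductive case: k ≥ 1
      -- the attachment vertex z of edge g k
      have hcard : (g k ∩ Uset g k).card = 1 := hstrict k hk1 (Nat.lt_succ_self k)
      obtain ⟨z, hz⟩ := Finset.card_eq_one.mp hcard
      have hzk : z ∈ g k := by
        have : z ∈ g k ∩ Uset g k := by rw [hz]; exact Finset.mem_singleton_self z
        exact (Finset.mem_inter.mp this).1
      have hzU : z ∈ Uset g k := by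
        have : z ∈ g k ∩ Uset g k := by rw [hz]; exact Finset.mem_singleton_self z
        exact (Finset.mem_inter.mp this).2
      have ih' := ih hk1 (fun i hi j hj => hinj i (by omega) j (by omega))
        (fun i h1 h2 => hstrict i h1 (by omega))
      -- helper for the mixed case
      have mixed : ∀ (a b : W), a ∈ Uset g k → b ∈ g k → b ∉ Uset g k → a ≠ b →
          ∃ n, 1 ≤ n ∧ ∃ v : ℕ → W, ∃ h : ℕ → Finset W,
            ((v 0 = a ∧ v n = b) ∨ (v 0 = b ∧ v n = a)) ∧ PathProps g (k+1) n v h := by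
        intro a b haU hbk hbU hab
        by_cases hak : a ∈ g k
        · exact single a b hak hbk hab
        · -- a ≠ z would follow from a ∉ g k?  z ∈ g k so a ≠ z
          have haz : a ≠ z := fun h => hak (h ▸ hzk)
          obtain ⟨n, hn1, v, h, hends, hp⟩ := ih' a z haU hzU haz
          -- normalize orientation so that v 0 = a and v n = z
          obtain ⟨v, h, hva, hvz, hp⟩ :
              ∃ v : ℕ → W, ∃ h : ℕ → Finset W, v 0 = a ∧ v n = z ∧ PathProps g k n v h := by
            rcases hends with ⟨e1, e2⟩ | ⟨e1, e2⟩
            · exact ⟨v, h, e1, e2, hp⟩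
            · obtain ⟨hp', r1, r2⟩ := pathProps_reverse hp
              exact ⟨_, _, by simpa [e2] using r1, by simpa [e1] using r2, hp'⟩
          obtain ⟨h1, h2, h3, h4, h5⟩ := hp
          -- extend at the end by edge g k to reach b
          refine ⟨n + 1, by omega, (fun i => if i ≤ n then v i else b),
            (fun i => if i < n then h i else g k),
            Or.inl ⟨by simp [hva], by simp⟩, ?_, ?_, ?_, ?_, ?_⟩
          · intro i hi j hj hv
            by_cases hi' : i ≤ n <;> by_cases hj' : j ≤ n <;> simp [hi', hj'] at hv
            · exact h1 i hi' j hj' hv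
            · exact absurd (hv ▸ h5 i hi') hbU
            · exact absurd (hv ▸ h5 j hj') (by simpa [hv] using hbU)
            · omega
          · intro i hi j hj hh
            by_cases hi' : i < n <;> by_cases hj' : j < n <;> simp [hi', hj'] at hh
            · exact h2 i hi' j hj' hh
            · obtain ⟨j0, hj0, he⟩ := h3 i hi'
              exact absurd (hinj j0 (by omega) k (by omega) (he ▸ hh)) (by omega)
            · obtain ⟨j0, hj0, he⟩ := h3 j hj'
              exact absurd (hinj j0 (by omega) k (by omega) (he ▸ hh.symm)) (by omega)
            · omega
          · intro i hi
            by_cases hi' : i < n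
            · obtain ⟨j, hj, he⟩ := h3 i hi'
              exact ⟨j, by omega, by simp [hi', he]⟩
            · exact ⟨k, by omega, by simp [hi']⟩
          · intro i hi
            by_cases hi' : i < n
            · have := h4 i hi'
              simp only [hi', if_pos, if_true]
              constructor
              · simp [Nat.le_of_lt hi', this.1]
              · have : i + 1 ≤ n := hi'
                simp [this, (h4 i hi').2]
            · have hin : i = n := by omega
              subst hin
              simp [hvz, hzk, hbk]
          · intro i hi
            by_cases hi' : i ≤ n
            · simp only [hi', if_true]
              exact Uset_mono (Nat.le_succ k) (h5 i hi')
            · simp only [hi', if_false]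
              exact subset_Uset (Nat.lt_succ_self k) hbk
      -- symmetric closure of a result
      have symm : ∀ (a b : W),
          (∃ n, 1 ≤ n ∧ ∃ v : ℕ → W, ∃ h : ℕ → Finset W,
            ((v 0 = a ∧ v n = b) ∨ (v 0 = b ∧ v n = a)) ∧ PathProps g (k+1) n v h) →
          (∃ n, 1 ≤ n ∧ ∃ v : ℕ → W, ∃ h : ℕ → Finset W,
            ((v 0 = b ∧ v n = a) ∨ (v 0 = a ∧ v n = b)) ∧ PathProps g (k+1) n v h) := by
        intro a b ⟨n, hn, v, h, hends, hp⟩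
        exact ⟨n, hn, v, h, hends.symm, hp⟩
      by_cases huU : u ∈ Uset g k <;> by_cases hwU : w ∈ Uset g k
      · obtain ⟨n, hn, v, h, hends, hp⟩ := ih' u w huU hwU huw
        exact ⟨n, hn, v, h, hends, pathProps_mono (Nat.le_succ k) hp⟩
      · have hwk : w ∈ g k := by
          rcases mem_Uset.mp hw with ⟨j, hj, hm⟩
          rcases Nat.lt_succ_iff_lt_or_eq.mp hj with hj' | hj'
          · exact absurd (mem_Uset.mpr ⟨j, hj', hm⟩) hwU
          · exact hj' ▸ hm
        exact mixed u w huU hwk hwU huw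
      · have huk : u ∈ g k := by
          rcases mem_Uset.mp hu with ⟨j, hj, hm⟩
          rcases Nat.lt_succ_iff_lt_or_eq.mp hj with hj' | hj'
          · exact absurd (mem_Uset.mpr ⟨j, hj', hm⟩) huU
          · exact hj' ▸ hm
        exact symm w u (mixed w u hwU huk huU huw.symm)
      · have huk : u ∈ g k := by
          rcases mem_Uset.mp hu with ⟨j, hj, hm⟩
          rcases Nat.lt_succ_iff_lt_or_eq.mp hj with hj' | hj'
          · exact absurd (mem_Uset.mpr ⟨j, hj', hm⟩) huU
          · exact hj' ▸ hm
        have hwk : w ∈ g k := by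
          rcases mem_Uset.mp hw with ⟨j, hj, hm⟩
          rcases Nat.lt_succ_iff_lt_or_eq.mp hj with hj' | hj'
          · exact absurd (mem_Uset.mpr ⟨j, hj', hm⟩) hwU
          · exact hj' ▸ hm
        exact single u w huk hwk huw

lemma Uset_congr {g g' : ℕ → Finset W} {i : ℕ} (h : ∀ j < i, g' j = g j) :
    Uset g' i = Uset g i := by
  unfold Uset
  apply Finset.biUnion_congr rfl
  intro j hj
  exact h j (Finset.mem_range.mp hj)

/-- If an unused edge meets the covered set in ≥ 2 vertices, there is a Berge cycle. -/
lemma bergeCycle_of_big_inter (T : FinHypergraph W) (g : ℕ → Finset W) (k : ℕ) (hk : 1 ≤ k)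
    (hmem : ∀ i < k, g i ∈ T.edges)
    (hinj : ∀ i < k, ∀ j < k, g i = g j → i = j)
    (hstrict : ∀ i, 1 ≤ i → i < k → (g i ∩ Uset g i).card = 1)
    (f : Finset W) (hf : f ∈ T.edges) (hnew : ∀ j < k, g j ≠ f)
    (hbig : 2 ≤ (f ∩ Uset g k).card) : T.HasBergeCycle := by
  obtain ⟨u, hu, w, hw, huw⟩ := Finset.one_lt_card.mp hbig
  obtain ⟨huf, huU⟩ := Finset.mem_inter.mp hu
  obtain ⟨hwf, hwU⟩ := Finset.mem_inter.mp hw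
  obtain ⟨n, hn, v, h, hends, h1, h2, h3, h4, h5⟩ :=
    path_exists g k hk hinj hstrict u w huU hwU huw
  have hv0 : v 0 ∈ f ∧ v n ∈ f := by
    rcases hends with ⟨e1, e2⟩ | ⟨e1, e2⟩ <;> simp [e1, e2, huf, hwf]
  refine ⟨n + 1, by omega, fun i => v i.val,
    fun i => if hlt : i.val < n then h i.val else f, ?_, ?_, ?_, ?_⟩
  · intro i j hv
    exact Fin.ext (h1 i.val (by omega) j.val (by omega) hv)
  · intro i j hh
    simp only at hh
    by_cases hi : i.val < n <;> by_cases hj : j.val < n <;> simp [hi, hj] at hh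
    · exact Fin.ext (h2 i.val hi j.val hj hh)
    · obtain ⟨j0, hj0, he⟩ := h3 i.val hi
      exact absurd (he ▸ hh) (hnew j0 hj0)
    · obtain ⟨j0, hj0, he⟩ := h3 j.val hj
      exact absurd (he ▸ hh.symm) (hnew j0 hj0)
    · exact Fin.ext (by omega)
  · intro i
    by_cases hi : i.val < n
    · simp only [hi, dif_pos]
      obtain ⟨j0, hj0, he⟩ := h3 i.val hi
      exact he ▸ hmem j0 hj0
    · simp only [hi, dif_neg, not_false_iff]
      exact hf
  · intro i
    by_cases hi : i.val < n
    · simp only [hi, dif_pos]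
      have hmod : (i.val + 1) % (n + 1) = i.val + 1 := Nat.mod_eq_of_lt (by omega)
      constructor
      · exact (h4 i.val hi).1
      · show v ((i.val + 1) % (n+1)) ∈ h i.val
        rw [hmod]
        exact (h4 i.val hi).2
    · have hin : i.val = n := by omega
      simp only [hi, dif_neg, not_false_iff]
      constructor
      · rw [hin]; exact hv0.2
      · show v ((i.val + 1) % (n+1)) ∈ f
        rw [hin]
        simp [hv0.1]

/-- A strict tree sequence covering fewer than all edges can be extended. -/
lemma extend_seq (T : FinHypergraph W) (hT : T.IsHypertree) (r : ℕ) (hr : 1 ≤ r)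
    (hu : T.Uniform r) (t : ℕ) (hte : T.edges.card = t)
    (g : ℕ → Finset W) (k : ℕ) (hk : 1 ≤ k) (hkt : k < t)
    (hmem : ∀ i < k, g i ∈ T.edges)
    (hinj : ∀ i < k, ∀ j < k, g i = g j → i = j)
    (hstrict : ∀ i, 1 ≤ i → i < k → (g i ∩ Uset g i).card = 1) :
    ∃ e ∈ T.edges, (∀ j < k, g j ≠ e) ∧ (e ∩ Uset g k).card = 1 := by
  classical
  set S : Finset (Finset W) := (Finset.range k).image g with hS
  have hSsub : S ⊆ T.edges := by
    intro e heS
    obtain ⟨j, hj, rfl⟩ := Finset.mem_image.mp heS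
    exact hmem j (Finset.mem_range.mp hj)
  have hScard : S.card = k := by
    rw [hS, Finset.card_image_of_injOn, Finset.card_range]
    intro i hi j hj hij
    exact hinj i (Finset.mem_range.mp hi) j (Finset.mem_range.mp hj) hij
  have hexu : ∃ f₀ ∈ T.edges, f₀ ∉ S := by
    by_contra hcon
    push_neg at hcon
    have : T.edges ⊆ S := hcon
    have := Finset.card_le_card this
    omega
  obtain ⟨f₀, hf₀, hf₀S⟩ := hexu
  by_cases hex : ∃ e ∈ T.edges, e ∉ S ∧ (e ∩ Uset g k).Nonempty
  · obtain ⟨e, he, heS, hne⟩ := hex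
    have hnewe : ∀ j < k, g j ≠ e := by
      intro j hj hje
      exact heS (hje ▸ Finset.mem_image.mpr ⟨j, Finset.mem_range.mpr hj, rfl⟩)
    have hcard1 : 1 ≤ (e ∩ Uset g k).card := Finset.card_pos.mpr hne
    rcases Nat.lt_or_ge (e ∩ Uset g k).card 2 with hlt | hge
    · exact ⟨e, he, hnewe, by omega⟩
    · exact absurd (bergeCycle_of_big_inter T g k hk hmem hinj hstrict e he hnewe hge)
        hT.2.2
  · exfalso
    push_neg at hex
    have hclosed : ∀ a b : W, Relation.ReflTransGen T.adj a b →
        a ∈ Uset g k → b ∈ Uset g k := by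
      intro a b hab
      induction hab with
      | refl => exact id
      | tail _ hadj ih =>
        intro ha
        rename_i b' c' _
        obtain ⟨e', he', hb'e, hc'e⟩ := hadj
        have hmid := ih ha
        have hne : (e' ∩ Uset g k).Nonempty := ⟨b', Finset.mem_inter.mpr ⟨hb'e, hmid⟩⟩
        by_cases heS : e' ∈ S
        · obtain ⟨j, hj, rfl⟩ := Finset.mem_image.mp heS
          exact subset_Uset (Finset.mem_range.mp hj) hc'e
        · exact absurd hne (Finset.not_nonempty_iff_eq_empty.mpr (hex e' he' heS))
    have hg0 : (g 0).Nonempty := by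
      rw [← Finset.card_pos, hu (g 0) (hmem 0 hk)]
      omega
    obtain ⟨u₀, hu₀⟩ := hg0
    have hu₀U : u₀ ∈ Uset g k := subset_Uset hk hu₀
    have hf₀ne : f₀.Nonempty := by
      rw [← Finset.card_pos, hu f₀ hf₀]
      omega
    obtain ⟨w₀, hw₀⟩ := hf₀ne
    have hw₀U : w₀ ∈ Uset g k := hclosed u₀ w₀ (hT.1 u₀ w₀) hu₀U
    exact (Finset.not_nonempty_iff_eq_empty.mpr (hex f₀ hf₀ hf₀S)) ⟨w₀, Finset.mem_inter.mpr ⟨hw₀, hw₀U⟩⟩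

/-- A full strict tree-ordering of the edges of a hypertree. -/
lemma full_seq (T : FinHypergraph W) (hT : T.IsHypertree) (r : ℕ) (hr : 1 ≤ r)
    (hu : T.Uniform r) (t : ℕ) (ht : 1 ≤ t) (hte : T.edges.card = t) :
    ∃ g : ℕ → Finset W, (∀ i < t, g i ∈ T.edges) ∧
      (∀ i < t, ∀ j < t, g i = g j → i = j) ∧
      (∀ i, 1 ≤ i → i < t → (g i ∩ Uset g i).card = 1) := by
  classical
  suffices hall : ∀ k, 1 ≤ k → k ≤ t → ∃ g : ℕ → Finset W, (∀ i < k, g i ∈ T.edges) ∧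
      (∀ i < k, ∀ j < k, g i = g j → i = j) ∧
      (∀ i, 1 ≤ i → i < k → (g i ∩ Uset g i).card = 1) by
    exact hall t ht le_rfl
  intro k
  induction k with
  | zero => omega
  | succ k ih =>
    intro _ hkt
    rcases Nat.eq_zero_or_pos k with hk0 | hk1
    · subst hk0
      have : T.edges.Nonempty := by rw [← Finset.card_pos, hte]; omega
      obtain ⟨f₀, hf₀⟩ := this
      refine ⟨fun _ => f₀, fun i _ => hf₀, ?_, ?_⟩
      · intro i hi j hj _; omega
      · intro i hi hi'; omega
    · obtain ⟨g, hmem, hinj, hstrict⟩ := ih hk1 (by omega)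
      obtain ⟨e, he, hnew, hecard⟩ := extend_seq T hT r hr hu t hte g k hk1 (by omega)
        hmem hinj hstrict
      refine ⟨fun i => if i < k then g i else e, ?_, ?_, ?_⟩
      · intro i hi
        by_cases h : i < k
        · simpa [h] using hmem i h
        · simpa [h] using he
      · intro i hi j hj hij
        by_cases h1 : i < k <;> by_cases h2 : j < k <;> simp [h1, h2] at hij
        · exact hinj i h1 j h2 hij
        · exact absurd hij (hnew i h1)
        · exact absurd hij.symm (hnew j h2)
        · omega
      · intro i h1i hik1
        have hUeq : Uset (fun i => if i < k then g i else e) i = Uset g i := by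
          apply Uset_congr
          intro j hj
          have : j < k := by omega
          simp [this]
        rcases Nat.lt_or_ge i k with hik | hik
        · simpa [hik, hUeq] using hstrict i h1i hik
        · have : i = k := by omega
          subst this
          simpa [hUeq] using hecard

/-- In a connected hypergraph with a nonempty edge, every vertex lies in some edge. -/
lemma covered (T : FinHypergraph W) (hconn : T.Connected) (f₀ : Finset W) (hf₀ : f₀ ∈ T.edges)
    (hne : f₀.Nonempty) (w : W) : ∃ e ∈ T.edges, w ∈ e := by
  obtain ⟨u₀, hu₀⟩ := hne
  rcases (Relation.ReflTransGen.cases_head (hconn w u₀)) with heq | ⟨b, hadj, _⟩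
  · exact ⟨f₀, hf₀, heq ▸ hu₀⟩
  · obtain ⟨e, he, hwe, _⟩ := hadj
    exact ⟨e, he, hwe⟩

end Stmt14Aux


/-- If `H - e*` has a proper `t`-coloring and `H` contains no copy of a fixed `r`-tree
`T` with `t` edges, then `H` itself has a proper `t`-coloring. -/
theorem stmt14 {V : Type*} [Fintype V] [DecidableEq V] (r t : ℕ) (hr : 2 ≤ r) (ht : 1 ≤ t)
    (H : FinHypergraph V) (hH : H.Uniform r) (estar : Finset V) (he : estar ∈ H.edges)
    (c : V → Fin t) (hc : FinHypergraph.Proper ⟨H.edges.erase estar⟩ c)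
    {W : Type*} [Fintype W] [DecidableEq W] (T : FinHypergraph W)
    (hT : T.IsHypertree) (hu : T.Uniform r) (hte : T.edges.card = t)
    (hfree : ¬ H.ContainsCopy T) :
    ∃ c' : V → Fin t, H.Proper c' := by
  classical
  obtain ⟨g, hgmem, hginj, hgstrict⟩ := Stmt14Aux.full_seq T hT r (by omega) hu t ht hte
  -- surjectivity of the edge sequence
  have hgsurj : ∀ e ∈ T.edges, ∃ i < t, g i = e := by
    have hsub : (Finset.range t).image g ⊆ T.edges := by
      intro e heS
      obtain ⟨i, hi, rfl⟩ := Finset.mem_image.mp heS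
      exact hgmem i (Finset.mem_range.mp hi)
    have hcard : ((Finset.range t).image g).card = t := by
      rw [Finset.card_image_of_injOn, Finset.card_range]
      intro i hi j hj hij
      exact hginj i (Finset.mem_range.mp hi) j (Finset.mem_range.mp hj) hij
    have heq : (Finset.range t).image g = T.edges :=
      Finset.eq_of_subset_of_card_le hsub (by omega)
    intro e heT
    obtain ⟨i, hi, hgi⟩ := Finset.mem_image.mp (heq ▸ heT)
    exact ⟨i, Finset.mem_range.mp hi, hgi⟩
  -- every vertex of W is covered by the sequence
  have hg0ne : (g 0).Nonempty := by
    rw [← Finset.card_pos, hu (g 0) (hgmem 0 ht)]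
    omega
  have hcover : ∀ w : W, w ∈ Stmt14Aux.Uset g t := by
    intro w
    obtain ⟨e, heT, hwe⟩ := Stmt14Aux.covered T hT.1 (g 0) (hgmem 0 ht) hg0ne w
    obtain ⟨i, hit, rfl⟩ := hgsurj e heT
    exact Stmt14Aux.subset_Uset hit hwe
  -- V is nonempty
  have hestar : estar.Nonempty := by
    rw [← Finset.card_pos, hH estar he]
    omega
  obtain ⟨v₀, hv₀V⟩ := hestar
  have hVcard : 1 ≤ Fintype.card V := Fintype.card_pos_iff.mpr ⟨v₀⟩
  set N := t * Fintype.card V with hN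
  -- outer induction on the potential
  suffices main : ∀ n : ℕ, ∀ c : V → Fin t, N ≤ (∑ v : V, (c v).val) + n →
      FinHypergraph.Proper ⟨H.edges.erase estar⟩ c → ∃ c' : V → Fin t, H.Proper c' by
    exact main N c (Nat.le_add_left N _) hc
  intro n
  induction n with
  | zero =>
    intro c hΦ _
    exfalso
    have hle : (∑ v : V, (c v).val) ≤ (t - 1) * Fintype.card V := by
      calc (∑ v : V, (c v).val) ≤ ∑ _v : V, (t - 1) := by
            apply Finset.sum_le_sum
            intro v _
            have := (c v).isLt
            omega
        _ = (t - 1) * Fintype.card V := by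
            rw [Finset.sum_const, Finset.card_univ, smul_eq_mul, mul_comm]
    have : (t - 1) * Fintype.card V < t * Fintype.card V :=
      Nat.mul_lt_mul_of_lt_of_le (by omega) (le_refl _) (by omega)
    omega
  | succ n ihn =>
    intro c hΦ hcp
    by_cases hmono : ∀ u ∈ estar, ∀ w ∈ estar, c u = c w
    · -- e* is monochromatic, color a
      obtain ⟨v₀', hv₀'⟩ := show estar.Nonempty from ⟨v₀, hv₀V⟩
      set a := c v₀' with ha_def
      have ha : ∀ u ∈ estar, c u = a := fun u hu' => hmono u hu' v₀' hv₀'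
      -- the color sequence σ
      have hcardea : ((Finset.univ : Finset (Fin t)).erase a).card = t - 1 := by
        rw [Finset.card_erase_of_mem (Finset.mem_univ a), Finset.card_univ, Fintype.card_fin]
      set ι := ((Finset.univ : Finset (Fin t)).erase a).orderIsoOfFin hcardea with hι
      set σ : ℕ → Fin t := fun j => if h : 1 ≤ j ∧ j < t then (ι ⟨j - 1, by omega⟩ : Fin t) else a
        with hσ
      have hσmem : ∀ j, 1 ≤ j → j < t →
          σ j ∈ (Finset.univ : Finset (Fin t)).erase a := by
        intro j h1 h2
        simp only [hσ, dif_pos (And.intro h1 h2)]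
        exact (ι ⟨j - 1, by omega⟩).2
      have hσne : ∀ j, 1 ≤ j → j < t → σ j ≠ a := by
        intro j h1 h2
        exact (Finset.mem_erase.mp (hσmem j h1 h2)).1
      have hσmono : ∀ i j, 1 ≤ i → i < j → j < t → σ i < σ j := by
        intro i j h1 h2 h3
        have hi' : 1 ≤ i ∧ i < t := ⟨h1, by omega⟩
        have hj' : 1 ≤ j ∧ j < t := ⟨by omega, h3⟩
        simp only [hσ, dif_pos hi', dif_pos hj']
        rw [Subtype.coe_lt_coe]
        apply (((Finset.univ : Finset (Fin t)).erase a).orderIsoOfFin hcardea).strictMono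
        exact Fin.mk_lt_mk.mpr (by omega)
      -- the partial embedding invariant
      set Emb : ℕ → (W → V) → Prop := fun k φ =>
        Set.InjOn φ ↑(Stmt14Aux.Uset g k) ∧
        (∀ j < k, (g j).image φ ∈ H.edges) ∧
        (∀ w ∈ Stmt14Aux.Uset g k,
          (φ w ∈ estar ∧ c (φ w) = a) ∨ ∃ j, 1 ≤ j ∧ j < k ∧ c (φ w) = σ j) with hEmb
      have inner : ∀ k, 1 ≤ k → k ≤ t → (∃ φ : W → V, Emb k φ) ∨
          (∃ c' : V → Fin t, H.Proper c') ∨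
          (∃ c' : V → Fin t, FinHypergraph.Proper ⟨H.edges.erase estar⟩ c' ∧
            (∑ v : V, (c v).val) < (∑ v : V, (c' v).val)) := by
        intro k
        induction k with
        | zero => omega
        | succ k ihk =>
          intro _ hk1t
          rcases Nat.eq_zero_or_pos k with hk0 | hk1
          · -- base: embed g 0 onto estar
            subst hk0
            left
            have hcards : (g 0).card = estar.card := by
              rw [hu (g 0) (hgmem 0 ht), hH estar he]
            set ψ := Finset.equivOfCardEq hcards with hψ
            set φ₀ : W → V := fun w => if h : w ∈ g 0 then (ψ ⟨w, h⟩ : V) else v₀ with hφ₀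
            have hU1 : ∀ w, w ∈ Stmt14Aux.Uset g 1 → w ∈ g 0 := by
              intro w hw
              obtain ⟨j, hj, hm⟩ := Stmt14Aux.mem_Uset.mp hw
              interval_cases j
              exact hm
            have hval : ∀ w (h : w ∈ g 0), φ₀ w = (ψ ⟨w, h⟩ : V) := by
              intro w h
              simp only [hφ₀, dif_pos h]
            have hmem0 : ∀ w (h : w ∈ g 0), φ₀ w ∈ estar := by
              intro w h
              rw [hval w h]
              exact (ψ ⟨w, h⟩).2
            have hinj0 : Set.InjOn φ₀ ↑(g 0) := by
              intro w1 hw1 w2 hw2 h12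
              have h1 : w1 ∈ g 0 := Finset.mem_coe.mp hw1
              have h2 : w2 ∈ g 0 := Finset.mem_coe.mp hw2
              rw [hval w1 h1, hval w2 h2] at h12
              exact congrArg Subtype.val (ψ.injective (Subtype.coe_injective h12))
            refine ⟨φ₀, ?_, ?_, ?_⟩
            · intro w1 hw1 w2 hw2 h12
              exact hinj0 (Finset.mem_coe.mpr (hU1 w1 (Finset.mem_coe.mp hw1)))
                (Finset.mem_coe.mpr (hU1 w2 (Finset.mem_coe.mp hw2))) h12
            · intro j hj
              have hj0 : j = 0 := by omega
              subst hj0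
              have hsub : (g 0).image φ₀ ⊆ estar := by
                intro y hy
                obtain ⟨w, hw, rfl⟩ := Finset.mem_image.mp hy
                exact hmem0 w hw
              have hc2 : ((g 0).image φ₀).card = estar.card := by
                rw [Finset.card_image_of_injOn hinj0, hcards]
              rw [Finset.eq_of_subset_of_card_le hsub (le_of_eq hc2.symm)]
              exact he
            · intro w hw
              have h1 : w ∈ g 0 := hU1 w hw
              exact Or.inl ⟨hmem0 w h1, ha _ (hmem0 w h1)⟩
          · -- inductive step
            rcases ihk hk1 (by omega) with ⟨φ, hφ⟩ | good
            · obtain ⟨hφinj, hφim, hφcol⟩ := hφ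
              have hkt : k < t := by omega
              have hcard1 : (g k ∩ Stmt14Aux.Uset g k).card = 1 := hgstrict k hk1 hkt
              obtain ⟨z, hzeq⟩ := Finset.card_eq_one.mp hcard1
              have hzboth : z ∈ g k ∩ Stmt14Aux.Uset g k := by
                rw [hzeq]
                exact Finset.mem_singleton_self z
              have hzk : z ∈ g k := (Finset.mem_inter.mp hzboth).1
              have hzU : z ∈ Stmt14Aux.Uset g k := (Finset.mem_inter.mp hzboth).2
              set x := φ z with hx
              have hsa : σ k ≠ a := hσne k hk1 hkt
              have holdne : ∀ w ∈ Stmt14Aux.Uset g k, c (φ w) ≠ σ k := by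
                intro w hw
                rcases hφcol w hw with ⟨_, hca⟩ | ⟨j, hj1, hjk, hcj⟩
                · rw [hca]
                  exact fun hh => hsa hh.symm
                · rw [hcj]
                  exact ne_of_lt (hσmono j k hj1 hjk hkt)
              by_cases hwit : ∃ gE ∈ H.edges, x ∈ gE ∧ ∀ y ∈ gE.erase x, c y = σ k
              · -- extend the embedding by the witness edge
                obtain ⟨gE, hgE, hxgE, hgEcol⟩ := hwit
                left
                have hcards : ((g k).erase z).card = (gE.erase x).card := by
                  rw [Finset.card_erase_of_mem hzk, Finset.card_erase_of_mem hxgE,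
                    hu (g k) (hgmem k hkt), hH gE hgE]
                set ψ := Finset.equivOfCardEq hcards with hψ
                set φ' : W → V :=
                  fun w => if h : w ∈ (g k).erase z then (ψ ⟨w, h⟩ : V) else φ w with hφ'
                have hdisj : ∀ w ∈ Stmt14Aux.Uset g k, w ∉ (g k).erase z := by
                  intro w hw hwe
                  obtain ⟨hwz, hwk⟩ := Finset.mem_erase.mp hwe
                  have hwboth : w ∈ g k ∩ Stmt14Aux.Uset g k := Finset.mem_inter.mpr ⟨hwk, hw⟩
                  rw [hzeq] at hwboth
                  exact hwz (Finset.mem_singleton.mp hwboth)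
                have hφ'old : ∀ w ∈ Stmt14Aux.Uset g k, φ' w = φ w := by
                  intro w hw
                  simp only [hφ', dif_neg (hdisj w hw)]
                have hφ'new : ∀ w (h : w ∈ (g k).erase z), φ' w = (ψ ⟨w, h⟩ : V) := by
                  intro w h
                  simp only [hφ', dif_pos h]
                have hnewmem : ∀ w (h : w ∈ (g k).erase z), φ' w ∈ gE.erase x := by
                  intro w h
                  rw [hφ'new w h]
                  exact (ψ ⟨w, h⟩).2
                have hnewcol : ∀ w (h : w ∈ (g k).erase z), c (φ' w) = σ k := by
                  intro w h
                  exact hgEcol _ (hnewmem w h)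
                have hsplit : ∀ w ∈ Stmt14Aux.Uset g (k+1),
                    w ∈ Stmt14Aux.Uset g k ∨ w ∈ (g k).erase z := by
                  intro w hw
                  rw [Stmt14Aux.Uset_succ, Finset.mem_union] at hw
                  rcases hw with hw | hw
                  · exact Or.inl hw
                  · by_cases hwz : w = z
                    · exact Or.inl (hwz ▸ hzU)
                    · exact Or.inr (Finset.mem_erase.mpr ⟨hwz, hw⟩)
                have hinj' : Set.InjOn φ' ↑(Stmt14Aux.Uset g (k+1)) := by
                  intro w1 hw1 w2 hw2 h12
                  rcases hsplit w1 (Finset.mem_coe.mp hw1) with h1 | h1 <;>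
                    rcases hsplit w2 (Finset.mem_coe.mp hw2) with h2 | h2
                  · rw [hφ'old w1 h1, hφ'old w2 h2] at h12
                    exact hφinj (Finset.mem_coe.mpr h1) (Finset.mem_coe.mpr h2) h12
                  · exfalso
                    apply holdne w1 h1
                    rw [← hφ'old w1 h1, h12, hnewcol w2 h2]
                  · exfalso
                    apply holdne w2 h2
                    rw [← hφ'old w2 h2, ← h12, hnewcol w1 h1]
                  · have heq : (ψ ⟨w1, h1⟩ : V) = (ψ ⟨w2, h2⟩ : V) := by
                      rw [← hφ'new w1 h1, ← hφ'new w2 h2]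
                      exact h12
                    exact congrArg Subtype.val (ψ.injective (Subtype.coe_injective heq))
                refine ⟨φ', hinj', ?_, ?_⟩
                · intro j hj
                  rcases Nat.lt_or_ge j k with hjk | hjk
                  · have himeq : (g j).image φ' = (g j).image φ := by
                      apply Finset.image_congr
                      intro w hw
                      exact hφ'old w (Stmt14Aux.subset_Uset hjk hw)
                    rw [himeq]
                    exact hφim j hjk
                  · have hjeq : j = k := by omega
                    subst hjeq
                    have hsub2 : (g j).image φ' ⊆ gE := by
                      intro y hy
                      obtain ⟨w, hw, rfl⟩ := Finset.mem_image.mp hy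
                      by_cases hwz : w = z
                      · subst hwz
                        rw [hφ'old w hzU, ← hx]
                        exact hxgE
                      · exact Finset.erase_subset _ _
                          (hnewmem w (Finset.mem_erase.mpr ⟨hwz, hw⟩))
                    have hinjr : Set.InjOn φ' ↑(g j) := by
                      intro w1 hw1 w2 hw2 h12
                      exact hinj'
                        (Finset.mem_coe.mpr (Stmt14Aux.subset_Uset (Nat.lt_succ_self j)
                          (Finset.mem_coe.mp hw1)))
                        (Finset.mem_coe.mpr (Stmt14Aux.subset_Uset (Nat.lt_succ_self j)
                          (Finset.mem_coe.mp hw2))) h12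
                    have hc2 : ((g j).image φ').card = gE.card := by
                      rw [Finset.card_image_of_injOn hinjr, hu (g j) (hgmem j hkt), hH gE hgE]
                    rw [Finset.eq_of_subset_of_card_le hsub2 (le_of_eq hc2.symm)]
                    exact hgE
                · intro w hw
                  rcases hsplit w hw with h1 | h1
                  · rw [hφ'old w h1]
                    rcases hφcol w h1 with hl | ⟨j, hj1, hjk, hcj⟩
                    · exact Or.inl hl
                    · exact Or.inr ⟨j, hj1, by omega, hcj⟩
                  · exact Or.inr ⟨k, hk1, by omega, hnewcol w h1⟩
              · -- no witness edge: recolor x with σ k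
                right
                set c2 := Function.update c x (σ k) with hc2d
                have hc2x : c2 x = σ k := Function.update_self x (σ k) c
                have hc2ne : ∀ y, y ≠ x → c2 y = c y := fun y hy =>
                  Function.update_of_ne hy _ _
                have claim1 : ∀ e ∈ H.edges, x ∈ e →
                    ¬ (∀ u ∈ e, ∀ w ∈ e, c2 u = c2 w) := by
                  intro e heH hxe hmn
                  apply hwit
                  refine ⟨e, heH, hxe, ?_⟩
                  intro y hy
                  obtain ⟨hyx, hye⟩ := Finset.mem_erase.mp hy
                  rw [← hc2ne y hyx]
                  exact (hmn y hye x hxe).trans hc2x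
                have claim2 : FinHypergraph.Proper ⟨H.edges.erase estar⟩ c2 := by
                  intro e heE hmn
                  by_cases hxe : x ∈ e
                  · exact claim1 e (Finset.mem_of_mem_erase heE) hxe hmn
                  · apply hcp e heE
                    intro u hu' w hw'
                    rw [← hc2ne u (fun hh => hxe (hh ▸ hu')),
                      ← hc2ne w (fun hh => hxe (hh ▸ hw'))]
                    exact hmn u hu' w hw'
                rcases hφcol z hzU with ⟨hxe, hxa⟩ | ⟨j, hj1, hjk, hcj⟩
                · -- x lies on e*: c2 is proper on all of H
                  left
                  refine ⟨c2, ?_⟩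
                  intro e heH hmn
                  by_cases hxe2 : x ∈ e
                  · exact claim1 e heH hxe2 hmn
                  · have hene : e ≠ estar := fun hh => hxe2 (hh ▸ hxe)
                    exact claim2 e (Finset.mem_erase.mpr ⟨hene, heH⟩) hmn
                · -- the potential strictly increases
                  right
                  refine ⟨c2, claim2, ?_⟩
                  have e1 : (∑ v : V, (c2 v).val) =
                      (c2 x).val + ∑ v ∈ Finset.univ.erase x, (c2 v).val :=
                    (Finset.add_sum_erase _ _ (Finset.mem_univ x)).symm
                  have e2 : (∑ v : V, (c v).val) =
                      (c x).val + ∑ v ∈ Finset.univ.erase x, (c v).val :=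
                    (Finset.add_sum_erase _ _ (Finset.mem_univ x)).symm
                  have e3 : (∑ v ∈ Finset.univ.erase x, (c2 v).val) =
                      ∑ v ∈ Finset.univ.erase x, (c v).val := by
                    apply Finset.sum_congr rfl
                    intro y hy
                    rw [hc2ne y (Finset.mem_erase.mp hy).1]
                  have e4 : (c2 x).val = (σ k).val := congrArg Fin.val hc2x
                  have hlt : (c x).val < (σ k).val := by
                    rw [hx, hcj]
                    exact Fin.lt_def.mp (hσmono j k hj1 hjk hkt)
                  omega
            · exact Or.inr good
      rcases inner t ht le_rfl with ⟨φ, hφinj, hφim, _⟩ | good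
      · exfalso
        apply hfree
        refine ⟨φ, ?_, ?_⟩
        · intro w1 w2 h12
          exact hφinj (Finset.mem_coe.mpr (hcover w1)) (Finset.mem_coe.mpr (hcover w2)) h12
        · intro e heT
          obtain ⟨i, hit, rfl⟩ := hgsurj e heT
          exact hφim i hit
      · rcases good with ⟨c', hc'⟩ | ⟨c', hc'p, hc'Φ⟩
        · exact ⟨c', hc'⟩
        · exact ihn c' (by omega) hc'p
    · -- e* is not monochromatic: c is already proper for H
      refine ⟨c, ?_⟩
      intro e heH hmono'
      by_cases heq : e = estar
      · exact hmono (heq ▸ hmono')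
      · exact hcp e (Finset.mem_erase.mpr ⟨heq, heH⟩) hmono'
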